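/- Fix u ≠ v in X and assume the paths are indexed so that d(P_1,{u,v}) ≤ d(P_2,{u,v}) ≤ … ≤ d(P_k,{u,v}), where d(P,{u,v}) = min(min_{p∈P} d(u,p), min_{p∈P} d(v,p)). Then for every s ∈ {1,…,k} and every level i ∈ {0,…,m−1}, the probability over the random choices (σ, α, β) that P_s cuts {u,v} horizontally at level i is at most (1/s)·d(u,v)/2^{i−2}. -/

import Mathlib

open Set

noncomputable section

variable {X : Type} [MetricSpace X] [Fintype X]

/-- `nbr Q δ` is the `δ`-neighborhood `N(Q,δ) = {x : min_{p ∈ Q} d x p ≤ δ}` of `Q`. -/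
def nbr (Q : Set X) (δ : ℝ) : Set X := {x | ∃ p ∈ Q, dist x p ≤ δ}

/-- The horizontal child `A_s = (A ∩ N(P_{σ s}, β·2^{i-2})) \ ⋃_{t<s} A_t` of a cluster `A`
at scale `i` (note `2 ^ i / 4 = 2^{i-2}`, and `⋃_{t<s} A_t = ⋃_{t<s} (A ∩ N(P_{σ t}, β·2^{i-2}))`). -/
def hchild {k : ℕ} (P : Fin k → Set X) (σ : Equiv.Perm (Fin k)) (β : ℝ)
    (A : Set X) (i : ℕ) (s : Fin k) : Set X :=
  (A ∩ nbr (P (σ s)) (β * (2 ^ i / 4))) \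
    ⋃ t, ⋃ (_ : t < s), A ∩ nbr (P (σ t)) (β * (2 ^ i / 4))

/-- The vertical child `A_{s,j}` of a cluster `A` at scale `i`:
the part of the horizontal child `A_s` with `(j-1+α)·2^{i-2} ≤ d r x < (j+α)·2^{i-2}`. -/
def vchild {k : ℕ} (r : X) (P : Fin k → Set X) (σ : Equiv.Perm (Fin k)) (α β : ℝ)
    (A : Set X) (i : ℕ) (s : Fin k) (j : ℕ) : Set X :=
  {x ∈ hchild P σ β A i s |
    ((j : ℝ) - 1 + α) * (2 ^ i / 4) ≤ dist r x ∧ dist r x < ((j : ℝ) + α) * (2 ^ i / 4)}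

/-- Clusters of the alternating partitions together with (the indices of) their trunks,
defined top-down: `partsTAux … n` is the partition `C (m - n)`.  At the top
`C m = {univ}` with trunk `P (σ 0)`; the clusters of `C i` are the nonempty vertical
children `A_{s,j}` (with trunk `P (σ s)`) of clusters `A ∈ C (i+1)`. -/
def partsTAux {k : ℕ} (hk : 0 < k) (r : X) (P : Fin k → Set X) (σ : Equiv.Perm (Fin k))
    (α β : ℝ) (m : ℕ) : ℕ → Set (Set X × Fin k)
  | 0 => {(Set.univ, σ ⟨0, hk⟩)}
  | n + 1 =>
      {Bl | Bl.1.Nonempty ∧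
        ∃ A : Set X, (∃ l, (A, l) ∈ partsTAux hk r P σ α β m n) ∧
          ∃ s : Fin k, ∃ j : ℕ,
            Bl.1 = vchild r P σ α β A (m - (n + 1)) s j ∧ Bl.2 = σ s}

/-- The alternating partition `C i` with trunk indices: `(A, l) ∈ partsT hk r P σ α β m i`
means that `A` is a cluster of `C i` whose trunk is the path `P l`. -/
def partsT {k : ℕ} (hk : 0 < k) (r : X) (P : Fin k → Set X) (σ : Equiv.Perm (Fin k))
    (α β : ℝ) (m i : ℕ) : Set (Set X × Fin k) :=
  partsTAux hk r P σ α β m (m - i)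

/-- The alternating partition `C i`. -/
def parts {k : ℕ} (hk : 0 < k) (r : X) (P : Fin k → Set X) (σ : Equiv.Perm (Fin k))
    (α β : ℝ) (m i : ℕ) : Set (Set X) :=
  {A | ∃ l, (A, l) ∈ partsT hk r P σ α β m i}

/-- `TrunkOf … i x l`: the path `P l` is the trunk of the cluster `C i (x)` of `C i`
containing `x`. -/
def TrunkOf {k : ℕ} (hk : 0 < k) (r : X) (P : Fin k → Set X) (σ : Equiv.Perm (Fin k))
    (α β : ℝ) (m i : ℕ) (x : X) (l : Fin k) : Prop :=
  ∃ A : Set X, (A, l) ∈ partsT hk r P σ α β m i ∧ x ∈ A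

/-- `u` and `v` lie in the same cluster of `C i`. -/
def SameCluster {k : ℕ} (hk : 0 < k) (r : X) (P : Fin k → Set X) (σ : Equiv.Perm (Fin k))
    (α β : ℝ) (m i : ℕ) (u v : X) : Prop :=
  ∃ A ∈ parts hk r P σ α β m i, u ∈ A ∧ v ∈ A

/-- `P s` settles `{u,v}` at level `i`: `u` and `v` are in the same cluster of `C (i+1)`,
and `P s` is the first path in the order `σ 0, σ 1, …` that is the trunk of at least one
of `C i (u)`, `C i (v)`. -/
def Settles {k : ℕ} (hk : 0 < k) (r : X) (P : Fin k → Set X) (σ : Equiv.Perm (Fin k))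
    (α β : ℝ) (m : ℕ) (s : Fin k) (i : ℕ) (u v : X) : Prop :=
  SameCluster hk r P σ α β m (i + 1) u v ∧
    ∃ s' : Fin k, σ s' = s ∧
      (TrunkOf hk r P σ α β m i u (σ s') ∨ TrunkOf hk r P σ α β m i v (σ s')) ∧
      ∀ t' : Fin k, t' < s' →
        ¬(TrunkOf hk r P σ α β m i u (σ t') ∨ TrunkOf hk r P σ α β m i v (σ t'))

/-- `P s` cuts `{u,v}` horizontally at level `i`: it settles `{u,v}` at level `i` and is
the trunk of exactly one of `C i (u)`, `C i (v)`. -/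
def CutsH {k : ℕ} (hk : 0 < k) (r : X) (P : Fin k → Set X) (σ : Equiv.Perm (Fin k))
    (α β : ℝ) (m : ℕ) (s : Fin k) (i : ℕ) (u v : X) : Prop :=
  Settles hk r P σ α β m s i u v ∧
    Xor' (TrunkOf hk r P σ α β m i u s) (TrunkOf hk r P σ α β m i v s)

/-- `P s` cuts `{u,v}` vertically at level `i`: `u` and `v` lie in the same cluster `A`
of `C (i+1)` and in the same horizontal child of `A`, whose trunk is `P s`, and
`C i (u) ≠ C i (v)`. -/
def CutsV {k : ℕ} (hk : 0 < k) (r : X) (P : Fin k → Set X) (σ : Equiv.Perm (Fin k))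
    (α β : ℝ) (m : ℕ) (s : Fin k) (i : ℕ) (u v : X) : Prop :=
  (∃ A ∈ parts hk r P σ α β m (i + 1), u ∈ A ∧ v ∈ A ∧
      ∃ s' : Fin k, σ s' = s ∧ u ∈ hchild P σ β A i s' ∧ v ∈ hchild P σ β A i s') ∧
    ¬SameCluster hk r P σ α β m i u v

open MeasureTheory in
/-- The probability, over a uniformly random permutation `σ` of `{1,…,k}`, a uniform
`α ∈ [0,1)` and a uniform `β ∈ [1,2)` (independent), that `P s` cuts `{u,v}` horizontally
at level `i` (note both `[0,1)` and `[1,2)` have Lebesgue measure `1`). -/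
def PrCutH {k : ℕ} (hk : 0 < k) (r : X) (P : Fin k → Set X) (m : ℕ)
    (s : Fin k) (i : ℕ) (u v : X) : ℝ :=
  (∑ σ : Equiv.Perm (Fin k),
      (volume {p : ℝ × ℝ | p.1 ∈ Set.Ico (0 : ℝ) 1 ∧ p.2 ∈ Set.Ico (1 : ℝ) 2 ∧
        CutsH hk r P σ p.1 p.2 m s i u v}).toReal) /
    (Fintype.card (Equiv.Perm (Fin k)))

open MeasureTheory in
/-- The probability, over a uniformly random permutation `σ` of `{1,…,k}`, a uniform
`α ∈ [0,1)` and a uniform `β ∈ [1,2)` (independent), that `P s` cuts `{u,v}` vertically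
at level `i`. -/
def PrCutV {k : ℕ} (hk : 0 < k) (r : X) (P : Fin k → Set X) (m : ℕ)
    (s : Fin k) (i : ℕ) (u v : X) : ℝ :=
  (∑ σ : Equiv.Perm (Fin k),
      (volume {p : ℝ × ℝ | p.1 ∈ Set.Ico (0 : ℝ) 1 ∧ p.2 ∈ Set.Ico (1 : ℝ) 2 ∧
        CutsV hk r P σ p.1 p.2 m s i u v}).toReal) /
    (Fintype.card (Equiv.Perm (Fin k)))

set_option linter.unusedSectionVars false

section Helpers

variable {k : ℕ} {hk : 0 < k} {r : X} {P : Fin k → Set X} {σ : Equiv.Perm (Fin k)}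
  {α β : ℝ} {m : ℕ}

lemma hchild_mem {A : Set X} {i : ℕ} {s' : Fin k} {x : X}
    (h : x ∈ hchild P σ β A i s') :
    x ∈ A ∧ x ∈ nbr (P (σ s')) (β * (2 ^ i / 4)) ∧
      ∀ t, t < s' → x ∉ nbr (P (σ t)) (β * (2 ^ i / 4)) := by
  obtain ⟨⟨hA, hn⟩, hnot⟩ := h
  refine ⟨hA, hn, fun t ht hmem => hnot ?_⟩
  simp only [Set.mem_iUnion]
  exact ⟨t, ht, hA, hmem⟩

lemma exists_least_hchild {A : Set X} {i : ℕ} {x : X} {w : Fin k}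
    (hA : x ∈ A) (hn : x ∈ nbr (P (σ w)) (β * (2 ^ i / 4))) :
    ∃ t' ≤ w, x ∈ hchild P σ β A i t' := by
  classical
  set F : Finset (Fin k) := Finset.univ.filter
    (fun t => x ∈ nbr (P (σ t)) (β * (2 ^ i / 4))) with hF
  have hwF : w ∈ F := by simp [hF, hn]
  have hne : F.Nonempty := ⟨w, hwF⟩
  refine ⟨F.min' hne, F.min'_le _ hwF, ⟨⟨hA, ?_⟩, ?_⟩⟩
  · have : F.min' hne ∈ F := F.min'_mem hne
    simpa [hF] using this
  · intro hmem
    simp only [Set.mem_iUnion] at hmem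
    obtain ⟨t, ht, _, htn⟩ := hmem
    have : F.min' hne ≤ t := F.min'_le _ (by simp [hF, htn])
    exact absurd ht (not_lt.mpr this)

lemma exists_vindex {c D : ℝ} (hc : 0 < c) (hα : α ≤ 1) (hD : 0 ≤ D) :
    ∃ j : ℕ, ((j : ℝ) - 1 + α) * c ≤ D ∧ D < ((j : ℝ) + α) * c := by
  by_cases h : D / c - α < 0
  · refine ⟨0, ?_, ?_⟩
    · push_cast
      nlinarith
    · have : D / c < α := by linarith
      push_cast
      calc D = D / c * c := by field_simp
      _ < (0 + α) * c := by nlinarith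
  · push_neg at h
    refine ⟨⌊D / c - α⌋₊ + 1, ?_, ?_⟩
    · have h1 : (⌊D / c - α⌋₊ : ℝ) ≤ D / c - α := Nat.floor_le h
      have hDc : D / c * c = D := by field_simp
      push_cast
      nlinarith [mul_le_mul_of_nonneg_right (by linarith : (⌊D / c - α⌋₊ : ℝ) + α ≤ D / c) hc.le]
    · have h2 : D / c - α < ⌊D / c - α⌋₊ + 1 := Nat.lt_floor_add_one _
      have : D / c < (⌊D / c - α⌋₊ + 1 : ℝ) + α := by linarith
      push_cast
      calc D = D / c * c := by field_simp
      _ < (((⌊D / c - α⌋₊ : ℝ) + 1) + α) * c := by nlinarith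

lemma trunk_of_child {A : Set X} {l₀ : Fin k} {i : ℕ} {t' : Fin k} {x : X}
    (hi : i < m) (hα : α ≤ 1)
    (hA : (A, l₀) ∈ partsT hk r P σ α β m (i + 1))
    (hx : x ∈ hchild P σ β A i t') :
    TrunkOf hk r P σ α β m i x (σ t') := by
  have hc : (0 : ℝ) < 2 ^ i / 4 := by positivity
  obtain ⟨j, hj1, hj2⟩ := exists_vindex (α := α) hc hα (dist_nonneg (x := r) (y := x))
  refine ⟨vchild r P σ α β A i t' j, ?_, ⟨hx, hj1, hj2⟩⟩
  have hmi : m - i = (m - (i + 1)) + 1 := by omega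
  have hmi2 : m - (m - (i + 1) + 1) = i := by omega
  show _ ∈ partsTAux hk r P σ α β m (m - i)
  rw [hmi]
  refine ⟨⟨x, hx, hj1, hj2⟩, A, ⟨l₀, hA⟩, t', j, ?_, rfl⟩
  simp [hmi2]

lemma trunk_unfold {i : ℕ} {x : X} {l : Fin k}
    (hi : i < m) (h : TrunkOf hk r P σ α β m i x l) :
    ∃ (A : Set X) (l₀ s' : Fin k), (A, l₀) ∈ partsT hk r P σ α β m (i + 1) ∧
      σ s' = l ∧ x ∈ hchild P σ β A i s' := by
  obtain ⟨A', hA', hxA'⟩ := h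
  have hmi : m - i = (m - (i + 1)) + 1 := by omega
  have hmi2 : m - (m - (i + 1) + 1) = i := by omega
  rw [show partsT hk r P σ α β m i = partsTAux hk r P σ α β m (m - i) from rfl, hmi] at hA'
  obtain ⟨-, A, ⟨l₀, hAmem⟩, s', j, hEq, hl⟩ := hA'
  rw [hmi2] at hEq
  simp only at hEq hl
  refine ⟨A, l₀, s', hAmem, hl.symm, ?_⟩
  rw [hEq] at hxA'
  exact hxA'.1

end Helpers

set_option linter.unusedSectionVars false

section Helpers2

variable {k : ℕ} {hk : 0 < k} {r : X} {P : Fin k → Set X} {σ : Equiv.Perm (Fin k)}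
  {α β : ℝ} {m : ℕ}

lemma trunk_of_nbr {i : ℕ} {A : Set X} {l₀ w : Fin k} {x : X}
    (hi : i < m) (hα : α ≤ 1)
    (hA : (A, l₀) ∈ partsT hk r P σ α β m (i + 1)) (hxA : x ∈ A)
    (hxn : x ∈ nbr (P (σ w)) (β * (2 ^ i / 4))) :
    ∃ t' ≤ w, TrunkOf hk r P σ α β m i x (σ t') := by
  obtain ⟨t', ht', hch⟩ := exists_least_hchild hxA hxn
  exact ⟨t', ht', trunk_of_child hi hα hA hch⟩

lemma cutsH_xor_nbr {i : ℕ} {s : Fin k} {u v : X}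
    (hi : i < m) (hα : α ≤ 1)
    (h : CutsH hk r P σ α β m s i u v) :
    Xor' (u ∈ nbr (P s) (β * (2 ^ i / 4))) (v ∈ nbr (P s) (β * (2 ^ i / 4))) := by
  obtain ⟨⟨hsame, s', hσs', hT, hminl⟩, hxor⟩ := h
  obtain ⟨A, ⟨l₀, hAmem⟩, huA, hvA⟩ := hsame
  rcases hxor with ⟨hTu, hnTv⟩ | ⟨hTv, hnTu⟩
  · left
    constructor
    · obtain ⟨B, l₀', s'', hB, hσ'', hch⟩ := trunk_unfold hi hTu
      have := (hchild_mem hch).2.1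
      rwa [hσ''] at this
    · intro hvn
      rw [← hσs'] at hvn
      obtain ⟨t', ht'le, hTv'⟩ := trunk_of_nbr hi hα hAmem hvA hvn
      rcases eq_or_lt_of_le ht'le with he | hlt
      · exact hnTv (by rwa [he, hσs'] at hTv')
      · exact hminl t' hlt (Or.inr hTv')
  · right
    constructor
    · obtain ⟨B, l₀', s'', hB, hσ'', hch⟩ := trunk_unfold hi hTv
      have := (hchild_mem hch).2.1
      rwa [hσ''] at this
    · intro hun
      rw [← hσs'] at hun
      obtain ⟨t', ht'le, hTu'⟩ := trunk_of_nbr hi hα hAmem huA hun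
      rcases eq_or_lt_of_le ht'le with he | hlt
      · exact hnTu (by rwa [he, hσs'] at hTu')
      · exact hminl t' hlt (Or.inl hTu')

lemma cutsH_perm_order {i : ℕ} {s t : Fin k} {u v : X}
    (hi : i < m) (hα : α ≤ 1) (hrP : ∀ s, r ∈ P s)
    (hord : ∀ s t : Fin k, s ≤ t →
      sInf ((fun p => min (dist u p) (dist v p)) '' P s) ≤
        sInf ((fun p => min (dist u p) (dist v p)) '' P t))
    (hts : t < s)
    (h : CutsH hk r P σ α β m s i u v) : σ.symm s < σ.symm t := by
  obtain ⟨⟨hsame, s', hσs', hT, hminl⟩, hxor⟩ := h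
  obtain ⟨A, ⟨l₀, hAmem⟩, huA, hvA⟩ := hsame
  have hs' : σ.symm s = s' := by rw [← hσs', Equiv.symm_apply_apply]
  rw [hs']
  by_contra hle
  push_neg at hle
  have htne : σ.symm t ≠ s' := by
    intro he
    have : t = s := by
      have := congrArg σ he
      rwa [Equiv.apply_symm_apply, hσs'] at this
    exact hts.ne this
  have ht' : σ.symm t < s' := lt_of_le_of_ne hle htne
  have key : ∀ x y : X, y ∈ A →
      TrunkOf hk r P σ α β m i x s →
      sInf ((fun p => min (dist x p) (dist y p)) '' P t) ≤
        sInf ((fun p => min (dist x p) (dist y p)) '' P s) →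
      ∃ t'' < s', TrunkOf hk r P σ α β m i y (σ t'') := by
    intro x y hyA hTx hordxy
    obtain ⟨B, l₀', s'', hB, hσ'', hch⟩ := trunk_unfold hi hTx
    have hs'' : s'' = s' := σ.injective (by rw [hσ'', hσs'])
    subst hs''
    obtain ⟨hxB, hxn, hexcl⟩ := hchild_mem hch
    rw [hσs'] at hxn
    obtain ⟨p₀, hp₀, hp₀le⟩ := hxn
    have hxexcl : x ∉ nbr (P t) (β * (2 ^ i / 4)) := by
      have := hexcl (σ.symm t) ht'
      rwa [Equiv.apply_symm_apply] at this
    have h1 : sInf ((fun p => min (dist x p) (dist y p)) '' P t) ≤ β * (2 ^ i / 4) :=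
      le_trans hordxy (le_trans
        (csInf_le (((P s).toFinite.image _).bddBelow) ⟨p₀, hp₀, rfl⟩)
        (le_trans (min_le_left _ _) hp₀le))
    obtain ⟨q₀, hq₀, hq₀eq⟩ :=
      Set.Nonempty.csInf_mem (s := (fun p => min (dist x p) (dist y p)) '' P t)
        (Set.Nonempty.image _ ⟨r, hrP t⟩) ((P t).toFinite.image _)
    have hq : min (dist x q₀) (dist y q₀) ≤ β * (2 ^ i / 4) := by rw [← hq₀eq] at h1; exact h1
    have hyq : dist y q₀ ≤ β * (2 ^ i / 4) := by
      rcases min_le_iff.mp hq with h' | h'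
      · exact absurd ⟨q₀, hq₀, h'⟩ hxexcl
      · exact h'
    have hyn : y ∈ nbr (P (σ (σ.symm t))) (β * (2 ^ i / 4)) := by
      rw [Equiv.apply_symm_apply]; exact ⟨q₀, hq₀, hyq⟩
    obtain ⟨t'', ht''le, hTy⟩ := trunk_of_nbr hi hα hAmem hyA hyn
    exact ⟨t'', lt_of_le_of_lt ht''le ht', hTy⟩
  rcases hT with hTu' | hTv'
  · rw [hσs'] at hTu'
    obtain ⟨t'', ht'', hTy⟩ := key u v hvA hTu' (hord t s hts.le)
    exact hminl t'' ht'' (Or.inr hTy)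
  · rw [hσs'] at hTv'
    have hco : (fun p => min (dist v p) (dist u p)) = (fun p => min (dist u p) (dist v p)) := by
      funext p; exact min_comm _ _
    obtain ⟨t'', ht'', hTy⟩ := key v u huA hTv' (by rw [hco]; exact hord t s hts.le)
    exact hminl t'' ht'' (Or.inl hTy)

end Helpers2

lemma card_min_filter {k : ℕ} (s t : Fin k) (hts : t ≤ s) :
    (Finset.univ.filter (fun σ : Equiv.Perm (Fin k) =>
        ∀ t', t' ≤ s → t' ≠ t → σ.symm t < σ.symm t')).card =
    (Finset.univ.filter (fun σ : Equiv.Perm (Fin k) =>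
        ∀ t', t' ≤ s → t' ≠ s → σ.symm s < σ.symm t')).card := by
  classical
  rcases eq_or_ne t s with rfl | hne
  · rfl
  have hswap : ∀ (σ : Equiv.Perm (Fin k)) (y : Fin k),
      (Equiv.swap s t * σ).symm y = σ.symm (Equiv.swap s t y) := fun σ y => rfl
  have hinv : ∀ σ : Equiv.Perm (Fin k),
      Equiv.swap s t * (Equiv.swap s t * σ) = σ := by
    intro σ; rw [← mul_assoc, Equiv.swap_mul_self, one_mul]
  apply Finset.card_nbij' (fun σ => Equiv.swap s t * σ) (fun σ => Equiv.swap s t * σ)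
  · intro σ hσ
    simp only [Finset.coe_filter, Set.mem_setOf_eq, Finset.mem_filter, Finset.mem_univ, true_and] at hσ ⊢
    intro t' h1 h2
    rw [hswap, hswap, Equiv.swap_apply_left]
    rcases eq_or_ne t' t with rfl | hne2
    · rw [Equiv.swap_apply_right]
      exact hσ s le_rfl (Ne.symm hne)
    · rw [Equiv.swap_apply_of_ne_of_ne h2 hne2]
      exact hσ t' h1 hne2
  · intro σ hσ
    simp only [Finset.coe_filter, Set.mem_setOf_eq, Finset.mem_filter, Finset.mem_univ, true_and] at hσ ⊢
    intro t' h1 h2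
    rw [hswap, hswap, Equiv.swap_apply_right]
    rcases eq_or_ne t' s with rfl | hne2
    · rw [Equiv.swap_apply_left]
      exact hσ t hts hne
    · rw [Equiv.swap_apply_of_ne_of_ne hne2 h2]
      exact hσ t' h1 hne2
  · intro σ _; exact hinv σ
  · intro σ _; exact hinv σ

lemma count_good {k : ℕ} (s : Fin k) :
    (Finset.univ.filter (fun σ : Equiv.Perm (Fin k) =>
        ∀ t, t < s → σ.symm s < σ.symm t)).card * ((s : ℕ) + 1) =
      Fintype.card (Equiv.Perm (Fin k)) := by
  classical
  set F : Fin k → Finset (Equiv.Perm (Fin k)) := fun t =>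
    Finset.univ.filter (fun σ => ∀ t', t' ≤ s → t' ≠ t → σ.symm t < σ.symm t') with hF
  have hGood : (Finset.univ.filter (fun σ : Equiv.Perm (Fin k) =>
      ∀ t, t < s → σ.symm s < σ.symm t)) = F s := by
    ext σ
    simp only [hF, Finset.mem_filter, Finset.mem_univ, true_and]
    constructor
    · intro h t' h1 h2; exact h t' (lt_of_le_of_ne h1 h2)
    · intro h t ht; exact h t ht.le ht.ne
  have hcover : (Finset.Iic s).biUnion F = Finset.univ := by
    apply Finset.eq_univ_of_forall
    intro σ
    simp only [hF, Finset.mem_biUnion, Finset.mem_Iic, Finset.mem_filter, Finset.mem_univ,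
      true_and]
    obtain ⟨t, htIic, hmin⟩ := Finset.exists_min_image (Finset.Iic s)
      (fun t => σ.symm t) ⟨s, Finset.mem_Iic.mpr le_rfl⟩
    refine ⟨t, Finset.mem_Iic.mp htIic, fun t' h1 h2 => ?_⟩
    have hle := hmin t' (Finset.mem_Iic.mpr h1)
    exact lt_of_le_of_ne hle (fun he => h2 (σ.symm.injective he).symm)
  have hdisj : ∀ t1 ∈ Finset.Iic s, ∀ t2 ∈ Finset.Iic s, t1 ≠ t2 → Disjoint (F t1) (F t2) := by
    intro t1 h1 t2 h2 hne
    rw [Finset.disjoint_left]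
    intro σ hσ1 hσ2
    simp only [hF, Finset.mem_filter, Finset.mem_univ, true_and] at hσ1 hσ2
    exact absurd (hσ2 t1 (Finset.mem_Iic.mp h1) hne)
      (not_lt.mpr (hσ1 t2 (Finset.mem_Iic.mp h2) (Ne.symm hne)).le)
  have hcard : Fintype.card (Equiv.Perm (Fin k)) = ∑ t ∈ Finset.Iic s, (F t).card := by
    rw [← Finset.card_biUnion hdisj, hcover, Finset.card_univ]
  have hsame : ∀ t ∈ Finset.Iic s, (F t).card = (F s).card := by
    intro t ht
    exact card_min_filter s t (Finset.mem_Iic.mp ht)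
  rw [hGood, hcard, Finset.sum_congr rfl hsame, Finset.sum_const, Fin.card_Iic,
    smul_eq_mul, Nat.mul_comm]

set_option linter.unusedSectionVars false in
lemma mem_nbr_iff {x : X} {Q : Set X} (hQ : Q.Nonempty) {δ : ℝ} :
    x ∈ nbr Q δ ↔ sInf ((dist x) '' Q) ≤ δ := by
  constructor
  · rintro ⟨p, hp, hle⟩
    exact le_trans (csInf_le ((Q.toFinite.image _).bddBelow) ⟨p, hp, rfl⟩) hle
  · intro h
    obtain ⟨p, hp, hpe⟩ :=
      Set.Nonempty.csInf_mem (s := (dist x) '' Q) (hQ.image _) (Q.toFinite.image _)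
    exact ⟨p, hp, le_trans hpe.le h⟩

/-- Fix `u ≠ v` and assume the paths are indexed so that
`d(P_1,{u,v}) ≤ … ≤ d(P_k,{u,v})`.  Then for every `s` and every level `i ∈ {0,…,m-1}`,
the probability over `(σ, α, β)` that `P s` cuts `{u,v}` horizontally at level `i` is
at most `(1/s) · d u v / 2^(i-2)` (here the 1-indexed position of `s : Fin k` is
`s + 1`, and `2 ^ i / 4 = 2^(i-2)`). -/
theorem statement11 {k : ℕ} (hk : 0 < k) (r : X) (P : Fin k → Set X) (m : ℕ)
    (hr : ∀ s, r ∈ P s) (hcov : (⋃ s, P s) = Set.univ)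
    (hpath : ∀ s, ∀ x ∈ P s, ∀ y ∈ P s, dist x y = |dist r x - dist r y|)
    (hmin : ∀ x y : X, x ≠ y → 1 ≤ dist x y)
    (hm : (m : ℤ) = 2 + ⌈Real.logb 2 (Metric.diam (Set.univ : Set X))⌉)
    (u v : X) (huv : u ≠ v)
    (hord : ∀ s t : Fin k, s ≤ t →
      sInf ((fun p => min (dist u p) (dist v p)) '' P s) ≤
        sInf ((fun p => min (dist u p) (dist v p)) '' P t)) :
    ∀ (s : Fin k) (i : ℕ), i < m →
      PrCutH hk r P m s i u v ≤
        (1 / ((s : ℕ) + 1 : ℝ)) * (dist u v / (2 ^ i / 4)) := by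
  classical
  intro s i hi
  have hcpos : (0 : ℝ) < 2 ^ i / 4 := by positivity
  set c : ℝ := 2 ^ i / 4 with hc
  set du : ℝ := sInf ((dist u) '' P s) with hdu
  set dv : ℝ := sInf ((dist v) '' P s) with hdv
  have hPs : (P s).Nonempty := ⟨r, hr s⟩
  have hbd1 : BddBelow ((dist u) '' P s) := ((P s).toFinite.image _).bddBelow
  have hbd2 : BddBelow ((dist v) '' P s) := ((P s).toFinite.image _).bddBelow
  have hduv : |du - dv| ≤ dist u v := by
    rw [abs_sub_le_iff]
    constructor
    · obtain ⟨q, hq, hqe⟩ :=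
        Set.Nonempty.csInf_mem (s := (dist v) '' P s) (hPs.image _) ((P s).toFinite.image _)
      have h1 : du ≤ dist u q := csInf_le hbd1 ⟨q, hq, rfl⟩
      have h2 : dist u q ≤ dist u v + dist v q := dist_triangle u v q
      rw [← hdv] at hqe
      linarith
    · obtain ⟨q, hq, hqe⟩ :=
        Set.Nonempty.csInf_mem (s := (dist u) '' P s) (hPs.image _) ((P s).toFinite.image _)
      have h1 : dv ≤ dist v q := csInf_le hbd2 ⟨q, hq, rfl⟩
      have h2 : dist v q ≤ dist v u + dist u q := dist_triangle v u q
      rw [← hdu] at hqe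
      rw [dist_comm v u] at h2
      linarith
  set Good : Finset (Equiv.Perm (Fin k)) :=
    Finset.univ.filter (fun σ => ∀ t, t < s → σ.symm s < σ.symm t) with hGoodDef
  have hvol : ∀ σ : Equiv.Perm (Fin k),
      (MeasureTheory.volume {p : ℝ × ℝ | p.1 ∈ Set.Ico (0 : ℝ) 1 ∧ p.2 ∈ Set.Ico (1 : ℝ) 2 ∧
        CutsH hk r P σ p.1 p.2 m s i u v}).toReal ≤
        if σ ∈ Good then dist u v / c else 0 := by
    intro σ
    by_cases hσ : σ ∈ Good
    · simp only [hσ, if_true]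
      have hsub : {p : ℝ × ℝ | p.1 ∈ Set.Ico (0 : ℝ) 1 ∧ p.2 ∈ Set.Ico (1 : ℝ) 2 ∧
          CutsH hk r P σ p.1 p.2 m s i u v} ⊆
          Set.Ico (0 : ℝ) 1 ×ˢ Set.Ico (min du dv / c) (max du dv / c) := by
        rintro ⟨a, b⟩ ⟨ha, hb, hcut⟩
        have hxor := cutsH_xor_nbr hi ha.2.le hcut
        have h1 : min du dv ≤ b * c ∧ b * c < max du dv := by
          rcases hxor with ⟨h1, h2⟩ | ⟨h1, h2⟩
          · have hu' : du ≤ b * c := by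
              rw [hdu]; exact (mem_nbr_iff hPs).mp h1
            have hv' : ¬ dv ≤ b * c := fun hh => h2 ((mem_nbr_iff hPs).mpr (hdv ▸ hh))
            exact ⟨le_trans (min_le_left _ _) hu',
              lt_of_lt_of_le (not_le.mp hv') (le_max_right _ _)⟩
          · have hv' : dv ≤ b * c := by
              rw [hdv]; exact (mem_nbr_iff hPs).mp h1
            have hu' : ¬ du ≤ b * c := fun hh => h2 ((mem_nbr_iff hPs).mpr (hdu ▸ hh))
            exact ⟨le_trans (min_le_right _ _) hv',
              lt_of_lt_of_le (not_le.mp hu') (le_max_left _ _)⟩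
        refine ⟨ha, ?_, ?_⟩
        · exact (div_le_iff₀ hcpos).mpr h1.1
        · exact (lt_div_iff₀ hcpos).mpr h1.2
      have hprod : MeasureTheory.volume
          (Set.Ico (0 : ℝ) 1 ×ˢ Set.Ico (min du dv / c) (max du dv / c)) =
          ENNReal.ofReal 1 * ENNReal.ofReal (max du dv / c - min du dv / c) := by
        rw [MeasureTheory.Measure.volume_eq_prod, MeasureTheory.Measure.prod_prod,
          Real.volume_Ico, Real.volume_Ico]
        norm_num
      have hne : MeasureTheory.volume
          (Set.Ico (0 : ℝ) 1 ×ˢ Set.Ico (min du dv / c) (max du dv / c)) ≠ ⊤ := by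
        rw [hprod]; exact ENNReal.mul_ne_top ENNReal.ofReal_ne_top ENNReal.ofReal_ne_top
      have hmono := ENNReal.toReal_mono hne (MeasureTheory.measure_mono hsub)
      refine le_trans hmono ?_
      have hminmax : max du dv / c - min du dv / c = |du - dv| / c := by
        rw [← sub_div, max_sub_min_eq_abs, abs_sub_comm]
      rw [hprod, ENNReal.toReal_mul, ENNReal.toReal_ofReal (by norm_num : (0:ℝ) ≤ 1),
        ENNReal.toReal_ofReal (by rw [hminmax]; positivity), one_mul, hminmax]
      gcongr
    · simp only [hσ, if_false]
      have hempty : {p : ℝ × ℝ | p.1 ∈ Set.Ico (0 : ℝ) 1 ∧ p.2 ∈ Set.Ico (1 : ℝ) 2 ∧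
          CutsH hk r P σ p.1 p.2 m s i u v} = ∅ := by
        ext p
        simp only [Set.mem_setOf_eq, Set.mem_empty_iff_false, iff_false, not_and]
        intro ha hb hcut
        exact hσ (Finset.mem_filter.mpr ⟨Finset.mem_univ _,
          fun t ht => cutsH_perm_order hi ha.2.le hr hord ht hcut⟩)
      rw [hempty]
      simp
  have hsum : (∑ σ : Equiv.Perm (Fin k),
      (MeasureTheory.volume {p : ℝ × ℝ | p.1 ∈ Set.Ico (0 : ℝ) 1 ∧ p.2 ∈ Set.Ico (1 : ℝ) 2 ∧
        CutsH hk r P σ p.1 p.2 m s i u v}).toReal) ≤ Good.card * (dist u v / c) := by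
    calc (∑ σ : Equiv.Perm (Fin k), (MeasureTheory.volume _).toReal)
        ≤ ∑ σ : Equiv.Perm (Fin k), if σ ∈ Good then dist u v / c else 0 :=
          Finset.sum_le_sum (fun σ _ => hvol σ)
      _ = ∑ σ ∈ Good, dist u v / c := by rw [Finset.sum_ite_mem, Finset.univ_inter]
      _ = Good.card * (dist u v / c) := by rw [Finset.sum_const, nsmul_eq_mul]
  have hcardR : (Good.card : ℝ) * ((s : ℕ) + 1) = Fintype.card (Equiv.Perm (Fin k)) := by
    exact_mod_cast count_good s
  have hNpos : (0 : ℝ) < Fintype.card (Equiv.Perm (Fin k)) := by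
    exact_mod_cast Fintype.card_pos
  have hGpos : (0 : ℝ) < Good.card := by nlinarith [hNpos, hcardR]
  show (∑ σ : Equiv.Perm (Fin k),
      (MeasureTheory.volume {p : ℝ × ℝ | p.1 ∈ Set.Ico (0 : ℝ) 1 ∧ p.2 ∈ Set.Ico (1 : ℝ) 2 ∧
        CutsH hk r P σ p.1 p.2 m s i u v}).toReal) /
      (Fintype.card (Equiv.Perm (Fin k))) ≤ (1 / ((s : ℕ) + 1 : ℝ)) * (dist u v / c)
  rw [div_le_iff₀ hNpos]
  refine le_trans hsum (le_of_eq ?_)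
  rw [← hcardR]
  field_simp
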